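/- For the follow-the-leader system with v C¹ strictly decreasing satisfying (V3) (ρ ↦ ρv'(ρ) non-increasing), and discrete densities y_i(t) = ℓ/(x_{i+1}(t) − x_i(t)), the discrete Oleinik condition holds: t · y_i(t) · (v(y_{i+1}(t)) − v(y_i(t))) ≤ ℓ for all t ≥ 0 and i = 0, ..., N−2. -/

import Mathlib

open Set

/-- If `f 0 < 0` and `f' ≤ 0` wherever `f ≥ 0`, then `f t ≤ 0`. -/
lemma ol_nonpos_of_deriv_nonpos
    (f F : ℝ → ℝ) (t : ℝ) (ht : 0 < t)
    (hd : ∀ s ∈ Icc (0:ℝ) t, HasDerivAt f (F s) s)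
    (h0 : f 0 < 0)
    (hF : ∀ s ∈ Ioc (0:ℝ) t, 0 ≤ f s → F s ≤ 0) : f t ≤ 0 := by
  by_contra hpos
  push_neg at hpos
  have hcont : ContinuousOn f (Icc 0 t) :=
    fun s hs => (hd s hs).continuousAt.continuousWithinAt
  set S : Set ℝ := Icc (0:ℝ) t ∩ f ⁻¹' Iic 0 with hSdef
  have hSclosed : IsClosed S :=
    hcont.preimage_isClosed_of_isClosed isClosed_Icc isClosed_Iic
  have hScpt : IsCompact S := isCompact_Icc.of_isClosed_subset hSclosed inter_subset_left
  have hS0 : (0:ℝ) ∈ S := ⟨⟨le_refl _, ht.le⟩, h0.le⟩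
  have hSne : S.Nonempty := ⟨0, hS0⟩
  set t₀ : ℝ := sSup S with ht₀def
  have ht₀S : t₀ ∈ S := hScpt.sSup_mem hSne
  have ht₀le : t₀ ≤ t := ht₀S.1.2
  have ht₀0 : 0 ≤ t₀ := ht₀S.1.1
  have hft0 : f t₀ ≤ 0 := ht₀S.2
  have ht₀lt : t₀ < t := ht₀le.lt_of_ne (fun h => absurd (h ▸ hft0) (not_le.mpr hpos))
  have hfpos : ∀ s ∈ Ioc t₀ t, 0 < f s := by
    intro s hs
    by_contra hle
    push_neg at hle
    have hsS : s ∈ S := ⟨⟨ht₀0.trans hs.1.le, hs.2⟩, hle⟩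
    exact absurd (le_csSup hScpt.bddAbove hsS) (not_le.mpr hs.1)
  have hsub : Icc t₀ t ⊆ Icc 0 t := Icc_subset_Icc ht₀0 le_rfl
  have hanti : AntitoneOn f (Icc t₀ t) := by
    apply antitoneOn_of_deriv_nonpos (convex_Icc _ _) (hcont.mono hsub)
    · intro s hs
      rw [interior_Icc] at hs
      exact (hd s (hsub (Ioo_subset_Icc_self hs))).differentiableAt.differentiableWithinAt
    · intro s hs
      rw [interior_Icc] at hs
      have hs' : s ∈ Ioc (0:ℝ) t := ⟨lt_of_le_of_lt ht₀0 hs.1, hs.2.le⟩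
      rw [(hd s (hsub (Ioo_subset_Icc_self hs))).deriv]
      exact hF s hs' (hfpos s ⟨hs.1, hs.2.le⟩).le
  have := hanti (left_mem_Icc.mpr ht₀lt.le) (right_mem_Icc.mpr ht₀lt.le) ht₀lt.le
  exact absurd (this.trans hft0) (not_le.mpr hpos)

/-- Extended discrete density: `Y j = ℓ/(x_{j+1} - x_j)` for `j < N`, and `Y N = 0`. -/
noncomputable def olY (N : ℕ) (ℓ : ℝ) (x : ℕ → ℝ → ℝ) (j : ℕ) (t : ℝ) : ℝ :=
  if j < N then ℓ / (x (j+1) t - x j t) else 0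

/-- Derivative of `s ↦ v (Y j s)`. -/
noncomputable def olD (N : ℕ) (v : ℝ → ℝ) (ℓ : ℝ) (x : ℕ → ℝ → ℝ) (j : ℕ) (s : ℝ) : ℝ :=
  deriv v (olY N ℓ x j s) *
    (-(olY N ℓ x j s)^2/ℓ * (v (olY N ℓ x (j+1) s) - v (olY N ℓ x j s)))

lemma v_hasDeriv {v : ℝ → ℝ} (hv_smooth : ContDiffOn ℝ 1 v (Set.Ici 0))
    {p : ℝ} (hp : 0 < p) : HasDerivAt v (deriv v p) p :=
  (((hv_smooth.differentiableOn one_ne_zero) p hp.le).differentiableAt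
    (Ici_mem_nhds hp)).hasDerivAt

lemma v_mul_deriv_nonpos {v : ℝ → ℝ}
    (hV3 : AntitoneOn (fun ρ => ρ * deriv v ρ) (Set.Ici (0:ℝ)))
    {p : ℝ} (hp : 0 ≤ p) : p * deriv v p ≤ 0 := by
  have h := hV3 (self_mem_Ici) hp hp
  simpa using h

lemma v_anti_rev {v : ℝ → ℝ} (hv_anti : StrictAntiOn v (Set.Ici 0))
    {a b : ℝ} (ha : 0 ≤ a) (hb : 0 ≤ b) (h : v a < v b) : b < a := by
  by_contra hc
  push_neg at hc
  rcases lt_or_eq_of_le hc with h' | h'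
  · exact absurd (hv_anti ha hb h') (not_lt.mpr h.le)
  · subst h'; exact lt_irrefl _ h

section facts
variable (N : ℕ) (v : ℝ → ℝ) (ℓ : ℝ) (hℓ : 0 < ℓ)
  (x : ℕ → ℝ → ℝ)
  (hOrder : ∀ i < N, ∀ t ≥ (0:ℝ), x i t < x (i + 1) t)
  (hODE_leader : ∀ t ≥ (0:ℝ), HasDerivAt (x N) (v 0) t)
  (hODE : ∀ i < N, ∀ t ≥ (0:ℝ),
      HasDerivAt (x i) (v (ℓ / (x (i + 1) t - x i t))) t)

include hℓ hOrder in
lemma olY_pos {j : ℕ} (hj : j < N) {s : ℝ} (hs : 0 ≤ s) : 0 < olY N ℓ x j s := by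
  rw [olY, if_pos hj]
  exact div_pos hℓ (sub_pos.mpr (hOrder j hj s hs))

include hℓ hOrder in
lemma olY_nonneg {j : ℕ} {s : ℝ} (hs : 0 ≤ s) : 0 ≤ olY N ℓ x j s := by
  rcases lt_or_ge j N with h | h
  · exact (olY_pos N ℓ hℓ x hOrder h hs).le
  · rw [olY, if_neg (not_lt.mpr h)]

lemma olY_eq {j : ℕ} (hj : j < N) : olY N ℓ x j = fun s => ℓ / (x (j+1) s - x j s) := by
  funext s; rw [olY, if_pos hj]

include hOrder in
lemma olY_mul {j : ℕ} (hj : j < N) {s : ℝ} (hs : 0 ≤ s) :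
    olY N ℓ x j s * (x (j+1) s - x j s) = ℓ := by
  rw [olY, if_pos hj]
  exact div_mul_cancel₀ ℓ (sub_pos.mpr (hOrder j hj s hs)).ne'

include hODE hODE_leader in
lemma olX_deriv {j : ℕ} (hj : j ≤ N) {s : ℝ} (hs : 0 ≤ s) :
    HasDerivAt (x j) (v (olY N ℓ x j s)) s := by
  rcases lt_or_eq_of_le hj with h | h
  · rw [olY, if_pos h]; exact hODE j h s hs
  · subst h; rw [olY, if_neg (lt_irrefl _)]; exact hODE_leader s hs

include hODE hODE_leader in
lemma olZ_deriv {j : ℕ} (hj : j < N) {s : ℝ} (hs : 0 ≤ s) :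
    HasDerivAt (fun u => x (j+1) u - x j u)
      (v (olY N ℓ x (j+1) s) - v (olY N ℓ x j s)) s :=
  (olX_deriv N v ℓ x hODE_leader hODE hj hs).sub
    (olX_deriv N v ℓ x hODE_leader hODE hj.le hs)

include hℓ hOrder hODE hODE_leader in
lemma olY_deriv {j : ℕ} (hj : j < N) {s : ℝ} (hs : 0 ≤ s) :
    HasDerivAt (olY N ℓ x j)
      (-(olY N ℓ x j s)^2/ℓ * (v (olY N ℓ x (j+1) s) - v (olY N ℓ x j s))) s := by
  have hz : 0 < x (j+1) s - x j s := sub_pos.mpr (hOrder j hj s hs)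
  have h := ((hasDerivAt_const s ℓ).div
    (olZ_deriv N v ℓ x hODE_leader hODE hj hs) hz.ne')
  simp only [olY_eq N ℓ x hj] at h ⊢
  refine h.congr_deriv ?_
  field_simp
  ring

include hℓ hOrder hODE hODE_leader in
lemma olvY_deriv (hv_smooth : ContDiffOn ℝ 1 v (Set.Ici 0))
    {j : ℕ} (hj : j ≤ N) {s : ℝ} (hs : 0 ≤ s) :
    HasDerivAt (fun u => v (olY N ℓ x j u)) (olD N v ℓ x j s) s := by
  rcases lt_or_eq_of_le hj with h | h
  · have hY := olY_deriv N v ℓ hℓ x hOrder hODE_leader hODE h hs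
    have hv := v_hasDeriv hv_smooth (olY_pos N ℓ hℓ x hOrder h hs)
    exact hv.comp s hY
  · have hY0 : ∀ u : ℝ, olY N ℓ x j u = 0 := fun u => by
      rw [olY, if_neg (show ¬ j < N by omega)]
    have hfun : (fun u => v (olY N ℓ x j u)) = fun _ => v 0 := by
      funext u; rw [hY0]
    have hval : olD N v ℓ x j s = 0 := by
      simp [olD, hY0]
    rw [hfun, hval]
    exact hasDerivAt_const s (v 0)
end facts

section key
variable (N : ℕ) (v : ℝ → ℝ) (ℓ : ℝ) (hℓ : 0 < ℓ)
  (hv_smooth : ContDiffOn ℝ 1 v (Set.Ici 0))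
  (hv_anti : StrictAntiOn v (Set.Ici 0))
  (hV3 : AntitoneOn (fun ρ => ρ * deriv v ρ) (Set.Ici (0:ℝ)))
  (x : ℕ → ℝ → ℝ)
  (hOrder : ∀ i < N, ∀ t ≥ (0:ℝ), x i t < x (i + 1) t)
  (hODE_leader : ∀ t ≥ (0:ℝ), HasDerivAt (x N) (v 0) t)
  (hODE : ∀ i < N, ∀ t ≥ (0:ℝ),
      HasDerivAt (x i) (v (ℓ / (x (i + 1) t - x i t))) t)

include hℓ hv_smooth hv_anti hV3 hOrder hODE_leader hODE in
lemma oleinik_key :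
    ∀ i, i < N → ∀ t, 0 ≤ t →
      t * (v (olY N ℓ x (i+1) t) - v (olY N ℓ x i t)) ≤ x (i+1) t - x i t := by
  have hne : ℓ ≠ 0 := hℓ.ne'
  suffices H : ∀ d i, i < N → N ≤ i + d → ∀ t, 0 ≤ t →
      t * (v (olY N ℓ x (i+1) t) - v (olY N ℓ x i t)) ≤ x (i+1) t - x i t by
    exact fun i hi => H N i hi (by omega)
  intro d
  induction d with
  | zero => intro i hi hle; omega
  | succ d ih =>
    intro i hi hle t ht
    rcases eq_or_lt_of_le ht with heq | htpos
    · rw [← heq, zero_mul]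
      exact (sub_pos.mpr (hOrder i hi 0 le_rfl)).le
    -- t > 0 : apply the comparison lemma to f s = s*q(s) - z(s)
    have main := ol_nonpos_of_deriv_nonpos
      (fun s => s * (v (olY N ℓ x (i+1) s) - v (olY N ℓ x i s)) - (x (i+1) s - x i s))
      (fun s => s * (olD N v ℓ x (i+1) s - olD N v ℓ x i s)) t htpos
      ?_ ?_ ?_
    · have main' : t * (v (olY N ℓ x (i+1) t) - v (olY N ℓ x i t))
          - (x (i+1) t - x i t) ≤ 0 := main
      linarith
    · -- derivative of f
      intro s hs
      have hs0 : (0:ℝ) ≤ s := hs.1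
      have h1 : HasDerivAt (fun u => v (olY N ℓ x (i+1) u) - v (olY N ℓ x i u))
          (olD N v ℓ x (i+1) s - olD N v ℓ x i s) s :=
        (olvY_deriv N v ℓ hℓ x hOrder hODE_leader hODE hv_smooth (by omega) hs0).sub
          (olvY_deriv N v ℓ hℓ x hOrder hODE_leader hODE hv_smooth hi.le hs0)
      have h2 := ((hasDerivAt_id s).mul h1).sub
        (olZ_deriv N v ℓ x hODE_leader hODE hi hs0)
      refine h2.congr_deriv ?_
      simp only [id]
      ring
    · -- f 0 < 0
      have := hOrder i hi 0 le_rfl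
      simp only [zero_mul, zero_sub, neg_sub]
      linarith
    · -- the key differential inequality
      intro s hs hf
      replace hf : 0 ≤ s * (v (olY N ℓ x (i+1) s) - v (olY N ℓ x i s))
          - (x (i+1) s - x i s) := hf
      have hs0 : (0:ℝ) < s := hs.1
      have hz : 0 < x (i+1) s - x i s := sub_pos.mpr (hOrder i hi s hs0.le)
      have hY0 : 0 < olY N ℓ x i s := olY_pos N ℓ hℓ x hOrder hi hs0.le
      have hY1 : 0 ≤ olY N ℓ x (i+1) s := olY_nonneg N ℓ hℓ x hOrder hs0.le
      have hsq : x (i+1) s - x i s ≤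
          s * (v (olY N ℓ x (i+1) s) - v (olY N ℓ x i s)) := by linarith
      have hq : 0 < v (olY N ℓ x (i+1) s) - v (olY N ℓ x i s) := by
        by_contra hc
        push_neg at hc
        nlinarith [mul_nonpos_of_nonneg_of_nonpos hs0.le hc]
      have hYlt : olY N ℓ x (i+1) s < olY N ℓ x i s :=
        v_anti_rev hv_anti hY0.le hY1 (by linarith)
      have hV3' : olY N ℓ x i s * deriv v (olY N ℓ x i s) ≤
          olY N ℓ x (i+1) s * deriv v (olY N ℓ x (i+1) s) :=
        hV3 hY1 hY0.le hYlt.le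
      have hd0 : deriv v (olY N ℓ x i s) ≤ 0 := by
        nlinarith [v_mul_deriv_nonpos hV3 hY0.le]
      have hmul0 : olY N ℓ x i s * (x (i+1) s - x i s) = ℓ :=
        olY_mul N ℓ x hOrder hi hs0.le
      -- Term 2 : -s * olD i s ≤ Y0 * deriv v Y0
      have eD0 : olD N v ℓ x i s * ℓ =
          deriv v (olY N ℓ x i s) * (-(olY N ℓ x i s)^2) *
            (v (olY N ℓ x (i+1) s) - v (olY N ℓ x i s)) := by
        simp only [olD]
        field_simp
      have T2 : -(s * olD N v ℓ x i s) ≤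
          olY N ℓ x i s * deriv v (olY N ℓ x i s) := by
        rw [← mul_le_mul_iff_of_pos_right hℓ]
        have key2 : deriv v (olY N ℓ x i s) * (olY N ℓ x i s)^2 *
              (s * (v (olY N ℓ x (i+1) s) - v (olY N ℓ x i s)))
            ≤ deriv v (olY N ℓ x i s) * (olY N ℓ x i s)^2 * (x (i+1) s - x i s) := by
          apply mul_le_mul_of_nonpos_left hsq
          nlinarith
        have eL : -(s * olD N v ℓ x i s) * ℓ =
            deriv v (olY N ℓ x i s) * (olY N ℓ x i s)^2 *
              (s * (v (olY N ℓ x (i+1) s) - v (olY N ℓ x i s))) := by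
          linear_combination (-s) * eD0
        have eR : olY N ℓ x i s * deriv v (olY N ℓ x i s) * ℓ =
            deriv v (olY N ℓ x i s) * (olY N ℓ x i s)^2 * (x (i+1) s - x i s) := by
          linear_combination (-(olY N ℓ x i s * deriv v (olY N ℓ x i s))) * hmul0
        rw [eL, eR]
        exact key2
      -- Term 1 : s * olD (i+1) s ≤ -(Y1 * deriv v Y1)
      have T1 : s * olD N v ℓ x (i+1) s ≤
          -(olY N ℓ x (i+1) s * deriv v (olY N ℓ x (i+1) s)) := by
        rcases lt_or_ge (i+1) N with h1N | h1N
        · -- use the induction hypothesis for i+1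
          have hY1p : 0 < olY N ℓ x (i+1) s := olY_pos N ℓ hℓ x hOrder h1N hs0.le
          have hd1 : deriv v (olY N ℓ x (i+1) s) ≤ 0 := by
            nlinarith [v_mul_deriv_nonpos hV3 hY1p.le]
          have hIH := ih (i+1) h1N (by omega) s hs0.le
          have hmul1 : olY N ℓ x (i+1) s * (x (i+1+1) s - x (i+1) s) = ℓ :=
            olY_mul N ℓ x hOrder h1N hs0.le
          have key1 : deriv v (olY N ℓ x (i+1) s) * (olY N ℓ x (i+1) s)^2 *
                (x (i+1+1) s - x (i+1) s)
              ≤ deriv v (olY N ℓ x (i+1) s) * (olY N ℓ x (i+1) s)^2 *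
                (s * (v (olY N ℓ x (i+1+1) s) - v (olY N ℓ x (i+1) s))) := by
            apply mul_le_mul_of_nonpos_left hIH
            nlinarith
          have eD1 : olD N v ℓ x (i+1) s * ℓ =
              deriv v (olY N ℓ x (i+1) s) * (-(olY N ℓ x (i+1) s)^2) *
                (v (olY N ℓ x (i+1+1) s) - v (olY N ℓ x (i+1) s)) := by
            simp only [olD]
            field_simp
          rw [← mul_le_mul_iff_of_pos_right hℓ]
          have eL : s * olD N v ℓ x (i+1) s * ℓ =
              -(deriv v (olY N ℓ x (i+1) s) * (olY N ℓ x (i+1) s)^2 *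
                (s * (v (olY N ℓ x (i+1+1) s) - v (olY N ℓ x (i+1) s)))) := by
            linear_combination s * eD1
          have eR : -(olY N ℓ x (i+1) s * deriv v (olY N ℓ x (i+1) s)) * ℓ =
              -(deriv v (olY N ℓ x (i+1) s) * (olY N ℓ x (i+1) s)^2 *
                (x (i+1+1) s - x (i+1) s)) := by
            linear_combination (olY N ℓ x (i+1) s * deriv v (olY N ℓ x (i+1) s)) * hmul1
          rw [eL, eR]
          linarith [key1]
        · -- i+1 = N : Y_{i+1} = 0 and olD (i+1) = 0
          have hY10 : olY N ℓ x (i+1) s = 0 := by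
            rw [olY, if_neg (not_lt.mpr h1N)]
          have hD10 : olD N v ℓ x (i+1) s = 0 := by
            simp [olD, hY10]
          rw [hD10, hY10]
          simp
      -- combine
      show s * (olD N v ℓ x (i+1) s - olD N v ℓ x i s) ≤ 0
      have expand : s * (olD N v ℓ x (i+1) s - olD N v ℓ x i s)
          = s * olD N v ℓ x (i+1) s + (-(s * olD N v ℓ x i s)) := by ring
      rw [expand]
      linarith [T1, T2, hV3']
end key

/-- Discrete Oleinik condition for the follow-the-leader system. -/
theorem discrete_oleinik_condition
    (N : ℕ) (v : ℝ → ℝ) (ℓ R : ℝ)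
    (hℓ : 0 < ℓ) (hR : 0 < R)
    (hv_smooth : ContDiffOn ℝ 1 v (Set.Ici 0))
    (hv_anti : StrictAntiOn v (Set.Ici 0))
    (hV3 : AntitoneOn (fun ρ => ρ * deriv v ρ) (Set.Ici (0:ℝ)))
    (x : ℕ → ℝ → ℝ)
    (hOrder : ∀ i < N, ∀ t ≥ (0:ℝ), x i t < x (i + 1) t)
    (hODE_leader : ∀ t ≥ (0:ℝ), HasDerivAt (x N) (v 0) t)
    (hODE : ∀ i < N, ∀ t ≥ (0:ℝ),
      HasDerivAt (x i) (v (ℓ / (x (i + 1) t - x i t))) t)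
    (hmax : ∀ i < N, ∀ t ≥ (0:ℝ), ℓ / (x (i + 1) t - x i t) ≤ R) :
    ∀ t ≥ (0:ℝ), ∀ i, i + 1 < N →
      t * (ℓ / (x (i + 1) t - x i t)) *
        (v (ℓ / (x (i + 2) t - x (i + 1) t)) - v (ℓ / (x (i + 1) t - x i t)))
      ≤ ℓ := by
  intro t ht i hi
  have hiN : i < N := by omega
  have hk := oleinik_key N v ℓ hℓ hv_smooth hv_anti hV3 x hOrder hODE_leader hODE
    i hiN t ht
  have e0 : olY N ℓ x i t = ℓ / (x (i+1) t - x i t) := by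
    rw [olY, if_pos hiN]
  have e1 : olY N ℓ x (i+1) t = ℓ / (x (i+2) t - x (i+1) t) := by
    rw [olY, if_pos hi]
  rw [e0, e1] at hk
  have hz : 0 < x (i+1) t - x i t := sub_pos.mpr (hOrder i hiN t ht)
  have hy : 0 < ℓ / (x (i+1) t - x i t) := div_pos hℓ hz
  have h2 : (ℓ / (x (i+1) t - x i t)) *
      (t * (v (ℓ / (x (i+2) t - x (i+1) t)) - v (ℓ / (x (i+1) t - x i t))))
      ≤ (ℓ / (x (i+1) t - x i t)) * (x (i+1) t - x i t) :=
    mul_le_mul_of_nonneg_left hk hy.le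
  have h3 : (ℓ / (x (i+1) t - x i t)) * (x (i+1) t - x i t) = ℓ :=
    div_mul_cancel₀ ℓ hz.ne'
  have h4 : t * (ℓ / (x (i + 1) t - x i t)) *
      (v (ℓ / (x (i + 2) t - x (i + 1) t)) - v (ℓ / (x (i + 1) t - x i t)))
      = (ℓ / (x (i+1) t - x i t)) *
      (t * (v (ℓ / (x (i+2) t - x (i+1) t)) - v (ℓ / (x (i+1) t - x i t)))) := by
    ring
  rw [h4]
  linarith
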